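/- Let k be a field and m ≥ 1 an integer. Every unit α of the truncated polynomial ring k[t]/(t^{m+1}) is the image of a product of finitely many non-constant irreducible polynomials in k[t], each having nonzero constant coefficient. -/

import Mathlib

/-- Let `k` be a field and `m ≥ 1`. Every unit `α` of the truncated
polynomial ring `k[t]/(t^(m+1))` is the image of a product of finitely many non-constant
irreducible polynomials in `k[t]`, each having nonzero constant coefficient. -/
theorem unit_truncated_irreducible_representatives (k : Type*) [Field k] (m : ℕ) (hm : 1 ≤ m)
    (α : Polynomial k ⧸ Ideal.span {(Polynomial.X : Polynomial k) ^ (m + 1)})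
    (hα : IsUnit α) :
    ∃ s : Multiset (Polynomial k),
      (∀ g ∈ s, Irreducible g ∧ 1 ≤ g.natDegree ∧ g.coeff 0 ≠ 0) ∧
      Ideal.Quotient.mk (Ideal.span {(Polynomial.X : Polynomial k) ^ (m + 1)}) s.prod = α := by
  classical
  obtain ⟨f, hf⟩ := Ideal.Quotient.mk_surjective α
  obtain ⟨β, hβ⟩ := isUnit_iff_exists_inv.mp hα
  obtain ⟨g, hg⟩ := Ideal.Quotient.mk_surjective β
  have hfg : f * g - 1 ∈ Ideal.span {(Polynomial.X : Polynomial k) ^ (m + 1)} := by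
    rw [← Ideal.Quotient.eq]
    rw [map_mul, hf, hg, map_one]
    exact hβ
  rw [Ideal.mem_span_singleton'] at hfg
  obtain ⟨a, ha⟩ := hfg
  have hf0 : f.coeff 0 ≠ 0 := by
    intro h0
    have := congrArg (fun p => Polynomial.coeff p 0) ha
    simp [Polynomial.mul_coeff_zero, h0, Polynomial.coeff_X_pow] at this
  set F : Polynomial k := f * (1 - Polynomial.X ^ (m + 1)) with hF
  have h2z : (1 - Polynomial.X ^ (m + 1) : Polynomial k).coeff 0 = 1 := by
    simp [Polynomial.coeff_X_pow]
  have hF0 : F.coeff 0 ≠ 0 := by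
    rw [hF, Polynomial.mul_coeff_zero, h2z, mul_one]; exact hf0
  have hFne : F ≠ 0 := fun h => hF0 (by simp [h])
  have h2deg : (1 - Polynomial.X ^ (m + 1) : Polynomial k).natDegree = m + 1 := by
    have e : (1 - Polynomial.X ^ (m + 1) : Polynomial k)
        = -(Polynomial.X ^ (m + 1) - Polynomial.C 1) := by rw [map_one]; ring
    rw [e, Polynomial.natDegree_neg, Polynomial.natDegree_X_pow_sub_C]
  have hFdeg : 0 < F.natDegree := by
    have hfne : f ≠ 0 := fun h => hf0 (by simp [h])
    have h2ne : (1 - Polynomial.X ^ (m + 1) : Polynomial k) ≠ 0 := fun h => by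
      rw [h] at h2z; simp at h2z
    rw [hF, Polynomial.natDegree_mul hfne h2ne, h2deg]
    omega
  have hFnu : ¬ IsUnit F := fun h => by
    rw [Polynomial.natDegree_eq_zero_of_isUnit h] at hFdeg; omega
  obtain ⟨u, hu⟩ := UniqueFactorizationMonoid.factors_prod hFne
  have hs₀ne : UniqueFactorizationMonoid.factors F ≠ 0 := by
    intro h
    rw [h] at hu
    simp only [Multiset.prod_zero, one_mul] at hu
    exact hFnu (hu ▸ u.isUnit)
  obtain ⟨q, hq⟩ := Multiset.exists_mem_of_ne_zero hs₀ne
  have hcons : q ::ₘ (UniqueFactorizationMonoid.factors F).erase q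
      = UniqueFactorizationMonoid.factors F := Multiset.cons_erase hq
  have hprod : ((↑u * q) ::ₘ (UniqueFactorizationMonoid.factors F).erase q).prod = F := by
    rw [Multiset.prod_cons, mul_assoc, ← Multiset.prod_cons, hcons, mul_comm, hu]
  refine ⟨(↑u * q) ::ₘ (UniqueFactorizationMonoid.factors F).erase q, ?_, ?_⟩
  · intro p hp
    have hirr : Irreducible p := by
      rcases Multiset.mem_cons.mp hp with h | h
      · rw [h]; exact (irreducible_units_mul u).mpr
          (UniqueFactorizationMonoid.irreducible_of_factor q hq)
      · exact UniqueFactorizationMonoid.irreducible_of_factor p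
          (Multiset.mem_of_mem_erase h)
    refine ⟨hirr, hirr.natDegree_pos, ?_⟩
    intro h0
    have hdvd : p ∣ F := hprod ▸ Multiset.dvd_prod hp
    exact hF0 (Polynomial.X_dvd_iff.mp (dvd_trans (Polynomial.X_dvd_iff.mpr h0) hdvd))
  · rw [hprod, hF, map_mul, map_sub, map_pow, map_one, hf]
    have hX : Ideal.Quotient.mk (Ideal.span {(Polynomial.X : Polynomial k) ^ (m + 1)})
        ((Polynomial.X : Polynomial k) ^ (m + 1)) = 0 :=
      Ideal.Quotient.eq_zero_iff_mem.mpr (Ideal.subset_span rfl)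
    rw [map_pow] at hX
    rw [hX, sub_zero, mul_one]
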